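/- Let 𝔤 be a six-dimensional non-nilpotent real almost abelian Lie algebra which admits an SKT structure (J,g) but does not admit any Kähler structure (i.e., no Hermitian structure (J',g') on 𝔤 has closed fundamental form). Then the torsion 3-form H = dᶜω of the SKT structure (J,g) is not exact: there exists no 2-form η on 𝔤 with dη = H, where d is the Chevalley–Eilenberg differential. -/

import Mathlib

noncomputable section

/-- The underlying vector space of a six-dimensional real Lie algebra. -/
abbrev V6 : Type := Fin 6 → ℝ

/-- The Lie bracket of the almost abelian Lie algebra determined by the matrix `A` of
`ad_{f₆}` (column `j` of `A` lists the coordinates of `[f₆, f_{j+1}]`; the ideal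
`span{f₁,…,f₅}` is abelian). -/
def braa (A : Matrix (Fin 6) (Fin 6) ℝ) : V6 →ₗ[ℝ] V6 →ₗ[ℝ] V6 :=
  LinearMap.mk₂ ℝ (fun x y => x 5 • A.mulVec y - y 5 • A.mulVec x)
    (by intro x x' y; simp [Matrix.mulVec_add, Pi.add_apply, add_smul, smul_add]; module)
    (by intro c x y; simp [Matrix.mulVec_smul, Pi.smul_apply, smul_eq_mul, mul_smul]; module)
    (by intro x y y'; simp [Matrix.mulVec_add, smul_add, add_smul]; module)
    (by intro c x y; simp [Matrix.mulVec_smul, Pi.smul_apply, smul_eq_mul, mul_smul]; module)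

/-- The bilinear form on `V6` determined by a matrix `G`. -/
def gOf (G : Matrix (Fin 6) (Fin 6) ℝ) : V6 →ₗ[ℝ] V6 →ₗ[ℝ] ℝ :=
  LinearMap.mk₂ ℝ (fun x y => dotProduct x (G.mulVec y))
    (by intro x x' y; simp [add_dotProduct])
    (by intro c x y; simp [smul_dotProduct, smul_eq_mul])
    (by intro x y y'; simp [Matrix.mulVec_add, dotProduct_add])
    (by intro c x y; simp [Matrix.mulVec_smul, dotProduct_smul, smul_eq_mul])

/-- The standard inner product, making `f₁,…,f₆` orthonormal. -/
def gstd : V6 →ₗ[ℝ] V6 →ₗ[ℝ] ℝ := gOf 1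

/-- The linear endomorphism of `V6` determined by a matrix. -/
def endOf (M : Matrix (Fin 6) (Fin 6) ℝ) : V6 →ₗ[ℝ] V6 := Matrix.toLin' M

/-- `br` is a Lie bracket: antisymmetric and satisfying the Jacobi identity
(bilinearity is built into the type). -/
def IsBracket (br : V6 →ₗ[ℝ] V6 →ₗ[ℝ] V6) : Prop :=
  (∀ x y, br x y = - br y x) ∧
  (∀ x y z, br (br x y) z + br (br y z) x + br (br z x) y = 0)

/-- The Lie algebra has an abelian ideal of codimension one. -/
def IsAlmostAbelian (br : V6 →ₗ[ℝ] V6 →ₗ[ℝ] V6) : Prop :=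
  ∃ h : Submodule ℝ V6, Module.finrank ℝ h = 5 ∧
    (∀ x ∈ h, ∀ y ∈ h, br x y = 0) ∧ (∀ x : V6, ∀ y ∈ h, br x y ∈ h)

/-- Nilpotency of the Lie algebra: some length of iterated brackets
`[x₁,[x₂,…,[xₙ,y]…]]` always vanishes. -/
def IsNilpotentBr (br : V6 →ₗ[ℝ] V6 →ₗ[ℝ] V6) : Prop :=
  ∃ n : ℕ, ∀ x : Fin n → V6, ∀ y : V6, (List.ofFn x).foldr (fun a b => br a b) y = 0

/-- The Nijenhuis tensor of `J`. -/
def Nij (br : V6 →ₗ[ℝ] V6 →ₗ[ℝ] V6) (J : V6 →ₗ[ℝ] V6) (x y : V6) : V6 :=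
  br (J x) (J y) - br x y - J (br (J x) y) - J (br x (J y))

/-- A complex structure: `J ∘ J = -id` with vanishing Nijenhuis tensor. -/
def IsCpxStr (br : V6 →ₗ[ℝ] V6 →ₗ[ℝ] V6) (J : V6 →ₗ[ℝ] V6) : Prop :=
  (∀ x, J (J x) = -x) ∧ (∀ x y, Nij br J x y = 0)

/-- A Hermitian structure: a complex structure together with a positive-definite
compatible inner product. -/
def IsHermStr (br : V6 →ₗ[ℝ] V6 →ₗ[ℝ] V6) (J : V6 →ₗ[ℝ] V6)
    (g : V6 →ₗ[ℝ] V6 →ₗ[ℝ] ℝ) : Prop :=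
  IsCpxStr br J ∧ (∀ x y, g x y = g y x) ∧ (∀ x, x ≠ 0 → 0 < g x x) ∧
    (∀ x y, g (J x) (J y) = g x y)

/-- The fundamental form `ω = g(J·,·)`. -/
def fund (J : V6 →ₗ[ℝ] V6) (g : V6 →ₗ[ℝ] V6 →ₗ[ℝ] ℝ) : V6 → V6 → ℝ :=
  fun x y => g (J x) y

/-- The Chevalley–Eilenberg differential of a 2-form. -/
def d2 (br : V6 →ₗ[ℝ] V6 →ₗ[ℝ] V6) (ω : V6 → V6 → ℝ) : V6 → V6 → V6 → ℝ :=
  fun x y z => -ω (br x y) z + ω (br x z) y - ω (br y z) x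

/-- The Chevalley–Eilenberg differential of a 3-form. -/
def d3 (br : V6 →ₗ[ℝ] V6 →ₗ[ℝ] V6) (H : V6 → V6 → V6 → ℝ) : V6 → V6 → V6 → V6 → ℝ :=
  fun x y z w => -H (br x y) z w + H (br x z) y w - H (br x w) y z
    - H (br y z) x w + H (br y w) x z - H (br z w) x y

/-- The form `dᶜω`, where `dᶜω(X,Y,Z) = dω(JX,JY,JZ)` and `ω = g(J·,·)`. -/
def dC (br : V6 →ₗ[ℝ] V6 →ₗ[ℝ] V6) (J : V6 →ₗ[ℝ] V6)
    (g : V6 →ₗ[ℝ] V6 →ₗ[ℝ] ℝ) : V6 → V6 → V6 → ℝ :=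
  fun x y z => d2 br (fund J g) (J x) (J y) (J z)

/-- A Kähler structure: a Hermitian structure with closed fundamental form. -/
def IsKahlerStr (br : V6 →ₗ[ℝ] V6 →ₗ[ℝ] V6) (J : V6 →ₗ[ℝ] V6)
    (g : V6 →ₗ[ℝ] V6 →ₗ[ℝ] ℝ) : Prop :=
  IsHermStr br J g ∧ ∀ x y z, d2 br (fund J g) x y z = 0

/-- An SKT (pluriclosed) structure: a Hermitian structure with `d(dᶜω) = 0`. -/
def IsSKTStr (br : V6 →ₗ[ℝ] V6 →ₗ[ℝ] V6) (J : V6 →ₗ[ℝ] V6)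
    (g : V6 →ₗ[ℝ] V6 →ₗ[ℝ] ℝ) : Prop :=
  IsHermStr br J g ∧ ∀ x y z w, d3 br (dC br J g) x y z w = 0

/-- A generalized Kähler structure `(J₊, J₋, g)`. -/
def IsGenKahler (br : V6 →ₗ[ℝ] V6 →ₗ[ℝ] V6) (Jp Jm : V6 →ₗ[ℝ] V6)
    (g : V6 →ₗ[ℝ] V6 →ₗ[ℝ] ℝ) : Prop :=
  IsHermStr br Jp g ∧ IsHermStr br Jm g ∧
    (∀ x y z, dC br Jp g x y z + dC br Jm g x y z = 0) ∧
    (∀ x y z w, d3 br (dC br Jp g) x y z w = 0)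

/-- Unimodularity: every adjoint operator is traceless. -/
def Unimodular (br : V6 →ₗ[ℝ] V6 →ₗ[ℝ] V6) : Prop :=
  ∀ x : V6, LinearMap.trace ℝ V6 (br x) = 0

/-- Isomorphism of Lie algebra structures on `V6`. -/
def LieIso (br br' : V6 →ₗ[ℝ] V6 →ₗ[ℝ] V6) : Prop :=
  ∃ φ : V6 ≃ₗ[ℝ] V6, ∀ x y, φ (br x y) = br' (φ x) (φ y)

/-- The basis 3-form `fⁱ ∧ fʲ ∧ f^k`. -/
def tri (i j k : Fin 6) : V6 → V6 → V6 → ℝ := fun x y z =>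
  Matrix.det !![x i, x j, x k; y i, y j, y k; z i, z j, z k]

set_option maxHeartbeats 2000000

/-- On a six-dimensional SKT non-nilpotent almost abelian Lie algebra admitting no
Kähler structure, the torsion 3-form `H = dᶜω` is not exact. -/
theorem stmt_8 (br : V6 →ₗ[ℝ] V6 →ₗ[ℝ] V6) (hbr : IsBracket br)
    (haa : IsAlmostAbelian br) (hnn : ¬ IsNilpotentBr br)
    (J : V6 →ₗ[ℝ] V6) (g : V6 →ₗ[ℝ] V6 →ₗ[ℝ] ℝ) (hskt : IsSKTStr br J g)
    (hnk : ¬ ∃ (J' : V6 →ₗ[ℝ] V6) (g' : V6 →ₗ[ℝ] V6 →ₗ[ℝ] ℝ), IsKahlerStr br J' g') :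
    ¬ ∃ η : V6 →ₗ[ℝ] V6 →ₗ[ℝ] ℝ, (∀ x y, η x y = - η y x) ∧
        (∀ x y z, d2 br (fun u w => η u w) x y z = dC br J g x y z) := by
  rintro ⟨η, hηa, hηd⟩
  obtain ⟨hherm, -⟩ := hskt
  obtain ⟨⟨hJ2, hNijJ⟩, hgsym, hgpos, hgJ⟩ := hherm
  obtain ⟨hsub, hdim, habel, hideal⟩ := haa
  have hanti := hbr.1
  have hfin : Module.finrank ℝ V6 = 6 := by
    simp [V6]
  -- construct a unit vector e orthogonal to hsub
  have hker_ne : LinearMap.ker (g.domRestrict₂ hsub) ≠ ⊥ := by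
    intro hbot
    have h1 := LinearMap.finrank_range_add_finrank_ker (g.domRestrict₂ hsub)
    rw [hbot, finrank_bot, hfin] at h1
    have h2 : Module.finrank ℝ (↥hsub →ₗ[ℝ] ℝ) = 5 := by
      rw [Module.finrank_linearMap, hdim, Module.finrank_self, mul_one]
    have h3 := Submodule.finrank_le (LinearMap.range (g.domRestrict₂ hsub))
    rw [h2] at h3
    omega
  obtain ⟨e₀, he₀mem, he₀ne⟩ := Submodule.exists_mem_ne_zero_of_ne_bot hker_ne
  have he₀ : ∀ y ∈ hsub, g e₀ y = 0 := by
    intro y hy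
    have h0 : (g.domRestrict₂ hsub) e₀ = 0 := LinearMap.mem_ker.1 he₀mem
    have := congrArg (fun f => f ⟨y, hy⟩) h0
    exact this
  have hc : 0 < g e₀ e₀ := hgpos e₀ he₀ne
  set c : ℝ := Real.sqrt (g e₀ e₀) with hcdef
  have hcpos : 0 < c := Real.sqrt_pos.2 hc
  set e : V6 := c⁻¹ • e₀ with hedef
  have hee : g e e = 1 := by
    have hcc : c * c = g e₀ e₀ := Real.mul_self_sqrt hc.le
    rw [hedef]
    simp only [map_smul, LinearMap.smul_apply, smul_eq_mul]
    field_simp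
    nlinarith [hcc]
  have heh : ∀ y ∈ hsub, g e y = 0 := by
    intro y hy
    rw [hedef]
    simp [map_smul, he₀ y hy]
  -- hsub = ker (g · e)
  have hmem : ∀ y, y ∈ hsub ↔ g y e = 0 := by
    have hle : hsub ≤ LinearMap.ker (g.flip e) := by
      intro y hy
      simp only [LinearMap.mem_ker, LinearMap.flip_apply]
      rw [hgsym]; exact heh y hy
    have heq : hsub = LinearMap.ker (g.flip e) := by
      refine Submodule.eq_of_le_of_finrank_le hle ?_
      have hne : LinearMap.ker (g.flip e) < ⊤ := by
        rw [lt_top_iff_ne_top]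
        intro htop
        have hmem' : e ∈ LinearMap.ker (g.flip e) := htop ▸ Submodule.mem_top
        have : g e e = 0 := by simpa [LinearMap.flip_apply] using hmem'
        rw [hee] at this; norm_num at this
      have := Submodule.finrank_lt (lt_top_iff_ne_top.1 hne)
      rw [hfin] at this
      omega
    intro y
    rw [heq]
    simp [LinearMap.mem_ker, LinearMap.flip_apply]
  -- the operator A = ad_e
  set A : V6 →ₗ[ℝ] V6 := br e with hAdef
  have hAe : A e = 0 := by
    have h := hanti e e
    have h2 : (2:ℝ) • br e e = 0 := by
      rw [two_smul]
      nth_rewrite 1 [h]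
      abel
    have := (smul_eq_zero.mp h2).resolve_left (by norm_num)
    simpa [hAdef] using this
  have hAmem : ∀ y, g (A y) e = 0 := by
    intro y
    have hy0 : (y - (g y e) • e) ∈ hsub := by
      rw [hmem]
      simp [map_sub, map_smul, hee]
    have h1 : br e (y - (g y e) • e) ∈ hsub := hideal e _ hy0
    have h2 : A y = br e (y - (g y e) • e) := by
      rw [hAdef]
      simp [map_sub, map_smul]
      rw [show br e e = A e from rfl, hAe]
      simp
    rw [h2]
    exact (hmem _).1 h1
  have hbrf : ∀ x y, br x y = (g x e) • A y - (g y e) • A x := by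
    intro x y
    have hx0 : (x - (g x e) • e) ∈ hsub := by
      rw [hmem]; simp [map_sub, map_smul, hee]
    have hy0 : (y - (g y e) • e) ∈ hsub := by
      rw [hmem]; simp [map_sub, map_smul, hee]
    have h0 : br (x - (g x e) • e) (y - (g y e) • e) = 0 := habel _ hx0 _ hy0
    simp only [map_sub, map_smul, LinearMap.sub_apply, LinearMap.smul_apply] at h0
    have hxe : br x e = -(br e x) := hanti x e
    rw [hxe] at h0
    rw [show br e e = A e from rfl, hAe] at h0
    rw [show (br e) x = A x from rfl] at h0
    linear_combination (norm := module) h0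
  -- X = -J e and basic identities
  set X : V6 := -(J e) with hXdef
  have hJe : J e = -X := by rw [hXdef]; simp
  have hJX : J X = e := by rw [hXdef]; rw [map_neg, hJ2 e]; simp
  have hJee : g (J e) e = 0 := by
    have h2 := hgJ (J e) e
    rw [hJ2 e] at h2
    have h3 : g (-e) (J e) = - g e (J e) := by simp
    rw [h3, hgsym e (J e)] at h2
    linarith
  have hXe : g X e = 0 := by rw [hXdef]; simp [hJee]
  have hXX : g X X = 1 := by
    rw [hXdef]; simp only [map_neg, LinearMap.neg_apply, neg_neg]
    rw [hgJ e e, hee]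
  have heX : g e X = 0 := by rw [hgsym]; exact hXe
  have hJuX : ∀ u, g (J u) X = - g u e := by
    intro u
    rw [hXdef]
    simp only [map_neg, neg_neg]
    rw [hgJ u e]
  have hJue : ∀ u, g (J u) e = g u X := by
    intro u
    conv_lhs => rw [← hJX]
    rw [hgJ u X]
  -- integrability consequences
  have hI1 : ∀ u, g u e = 0 → g u X = 0 → A u = - J (A (J u)) := by
    intro u hue huX
    have hn := hNijJ u e
    have hJu_e : g (J u) e = 0 := by rw [hJue]; exact huX
    have hJe_e : g (J e) e = 0 := hJee
    have b1 : br (J u) (J e) = 0 := by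
      rw [hbrf]; rw [hJu_e, hJe_e]; simp
    have b2 : br u e = -(A u) := by
      rw [hbrf]; rw [hue, hee]; simp [hAe]
    have b3 : br (J u) e = -(A (J u)) := by
      rw [hbrf]; rw [hJu_e, hee]; simp [hAe]
    have b4 : br u (J e) = 0 := by
      rw [hbrf]; rw [hue, hJe_e]; simp
    rw [Nij, b1, b2, b3, b4] at hn
    simp only [map_neg, map_zero, zero_sub, sub_zero, neg_neg] at hn
    have hn2 : A u + J (A (J u)) = 0 := by linear_combination (norm := module) hn
    exact eq_neg_of_add_eq_zero_left hn2
  have hI3 : ∀ u, g u e = 0 → g u X = 0 → J (A u) = A (J u) := by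
    intro u hue huX
    rw [hI1 u hue huX]
    rw [map_neg, hJ2]
    simp
  have hAX0 : ∀ u, g u e = 0 → g u X = 0 → g (A u) X = 0 := by
    intro u hue huX
    rw [hI1 u hue huX]
    simp only [map_neg, LinearMap.neg_apply]
    rw [hJuX (A (J u)), hAmem]
    simp
  -- skewness of A on k, from exactness (H vanishes on Λ³h)
  have hstep : ∀ p q, g p e = 0 → g p X = 0 → g q e = 0 → g q X = 0 →
      g (J (A p)) q = g (J (A q)) p := by
    intro p q hpe hpX hqe hqX
    have hd := hηd (-(J p)) (-(J q)) X
    have hJpe : g (-(J p)) e = 0 := by simp [hJue, hpX]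
    have hJqe : g (-(J q)) e = 0 := by simp [hJue, hqX]
    have b1 : br (-(J p)) (-(J q)) = 0 := by rw [hbrf, hJpe, hJqe]; simp
    have b2 : br (-(J p)) X = 0 := by rw [hbrf, hJpe, hXe]; simp
    have b3 : br (-(J q)) X = 0 := by rw [hbrf, hJqe, hXe]; simp
    rw [show d2 br (fun u w => η u w) (-(J p)) (-(J q)) X =
        -η (br (-(J p)) (-(J q))) X + η (br (-(J p)) X) (-(J q)) - η (br (-(J q)) X) (-(J p)) from rfl] at hd
    rw [b1, b2, b3] at hd
    simp only [map_zero, LinearMap.zero_apply, neg_zero, add_zero, sub_zero, zero_add, zero_sub] at hd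
    have hj1 : J (-(J p)) = p := by rw [map_neg, hJ2, neg_neg]
    have hj2 : J (-(J q)) = q := by rw [map_neg, hJ2, neg_neg]
    rw [show dC br J g (-(J p)) (-(J q)) X =
        d2 br (fund J g) (J (-(J p))) (J (-(J q))) (J X) from rfl, hj1, hj2, hJX] at hd
    have c1 : br p q = 0 := by rw [hbrf, hpe, hqe]; simp
    have c2 : br p e = -(A p) := by rw [hbrf, hpe, hee]; simp [hAe]
    have c3 : br q e = -(A q) := by rw [hbrf, hqe, hee]; simp [hAe]
    rw [show d2 br (fund J g) p q e =
        -(fund J g) (br p q) e + (fund J g) (br p e) q - (fund J g) (br q e) p from rfl,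
      c1, c2, c3] at hd
    simp only [fund, map_zero, map_neg, LinearMap.zero_apply, LinearMap.neg_apply, neg_zero,
      zero_add] at hd
    linarith
  have hEA : ∀ p q, g p e = 0 → g p X = 0 → g q e = 0 → g q X = 0 →
      g (A p) q = - g p (A q) := by
    intro p q hpe hpX hqe hqX
    have hJqe : g (J q) e = 0 := by rw [hJue]; exact hqX
    have hJqX : g (J q) X = 0 := by rw [hJuX, hqe]; simp
    have h1 : g (A p) q = g (J (A p)) (J q) := (hgJ (A p) q).symm
    rw [h1, hstep p (J q) hpe hpX hJqe hJqX]
    rw [hI3 (J q) hJqe hJqX, hJ2]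
    simp only [map_neg, LinearMap.neg_apply]
    rw [hgsym]
  -- the vector v and scalar a
  set a : ℝ := g (A X) X with hadef
  set v : V6 := A X - a • X with hvdef
  have hve : g v e = 0 := by
    rw [hvdef]; simp [map_sub, map_smul, hAmem, hXe]
  have hvX : g v X = 0 := by
    rw [hvdef]
    simp only [map_sub, map_smul, LinearMap.sub_apply, LinearMap.smul_apply, smul_eq_mul]
    rw [hXX, ← hadef]; ring
  have hAX : A X = v + a • X := by rw [hvdef]; abel
  -- projection onto k and the skew operator S
  set P : V6 →ₗ[ℝ] V6 :=
    LinearMap.id - (g.flip X).smulRight X - (g.flip e).smulRight e with hPdef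
  have hPapp : ∀ y, P y = y - (g y X) • X - (g y e) • e := by
    intro y
    rw [hPdef]
    simp [LinearMap.smulRight_apply, LinearMap.flip_apply]
  have hPe : ∀ y, g (P y) e = 0 := by
    intro y; rw [hPapp]
    simp only [map_sub, map_smul, LinearMap.sub_apply, LinearMap.smul_apply, smul_eq_mul]
    rw [hXe, hee]; ring
  have hPX : ∀ y, g (P y) X = 0 := by
    intro y; rw [hPapp]
    simp only [map_sub, map_smul, LinearMap.sub_apply, LinearMap.smul_apply, smul_eq_mul]
    rw [hXX, heX]; ring
  have hPfix : ∀ y, g y e = 0 → g y X = 0 → P y = y := by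
    intro y h1 h2; rw [hPapp, h1, h2]; simp
  have hPdec : ∀ y, y = P y + (g y X) • X + (g y e) • e := by
    intro y; rw [hPapp]; abel
  set S : V6 →ₗ[ℝ] V6 := A ∘ₗ P with hSdef
  have hSapp : ∀ y, S y = A (P y) := fun y => rfl
  have hSe : ∀ y, g (S y) e = 0 := fun y => hAmem _
  have hSX : ∀ y, g (S y) X = 0 := fun y => hAX0 _ (hPe y) (hPX y)
  have hSskew : ∀ x y, g (S x) y = - g x (S y) := by
    intro x y
    have step1 : g (S x) y = g (S x) (P y) := by
      conv_lhs => rw [hPdec y]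
      simp only [map_add, map_smul, smul_eq_mul]
      rw [hSX, hSe]; ring
    rw [step1, hSapp, hSapp]
    rw [hEA (P x) (P y) (hPe x) (hPX x) (hPe y) (hPX y)]
    have step2 : g (P x) (A (P y)) = g x (A (P y)) := by
      conv_rhs => rw [hPdec x]
      simp only [map_add, LinearMap.add_apply, map_smul, LinearMap.smul_apply, smul_eq_mul]
      rw [hgsym X (A (P y)), hgsym e (A (P y)), hAX0 (P y) (hPe y) (hPX y), hAmem (P y)]
      ring
    rw [step2]
  -- existence of w with A w = a•w - v
  have hw : ∃ w : V6, g w e = 0 ∧ g w X = 0 ∧ A w = a • w - v := by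
    rcases eq_or_ne a 0 with ha | ha
    · -- a = 0 : use η to show v ∈ range (A|k)
      have hAXv : A X = v := by rw [hAX, ha]; simp
      have hdisj : LinearMap.range S ⊓ LinearMap.ker S = ⊥ := by
        rw [eq_bot_iff]
        rintro x hx
        obtain ⟨⟨u, rfl⟩, hk⟩ := Submodule.mem_inf.1 hx
        have hk0 : S (S u) = 0 := LinearMap.mem_ker.1 hk
        have h1 : g (S u) (S u) = 0 := by
          rw [hSskew u (S u), hk0]; simp
        have : S u = 0 := by
          by_contra hne
          exact absurd h1 (ne_of_gt (hgpos _ hne))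
        simp [this]
      have hrk := LinearMap.finrank_range_add_finrank_ker S
      rw [hfin] at hrk
      have hsup := Submodule.finrank_sup_add_finrank_inf_eq (LinearMap.range S) (LinearMap.ker S)
      rw [hdisj, finrank_bot, add_zero] at hsup
      have htop : LinearMap.range S ⊔ LinearMap.ker S = ⊤ :=
        Submodule.eq_top_of_finrank_eq (by rw [hsup, hrk, hfin])
      have hvmem : v ∈ LinearMap.range S ⊔ LinearMap.ker S := htop ▸ Submodule.mem_top
      obtain ⟨r, hr, s, hs, hrs⟩ := Submodule.mem_sup.1 hvmem
      obtain ⟨u₀, rfl⟩ := hr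
      set u : V6 := P u₀ with hudef
      have hue : g u e = 0 := hPe u₀
      have huX : g u X = 0 := hPX u₀
      have hru : S u₀ = A u := rfl
      set v₀ : V6 := v - A u with hv₀def
      have hv₀s : v₀ = s := by rw [hv₀def, ← hrs, hru]; abel
      have hAue : g (A u) e = 0 := hAmem u
      have hAuX : g (A u) X = 0 := hAX0 u hue huX
      have hv₀e : g v₀ e = 0 := by rw [hv₀def]; simp [map_sub, hve, hAue]
      have hv₀X : g v₀ X = 0 := by rw [hv₀def]; simp [map_sub, hvX, hAuX]
      have hSv₀ : S v₀ = 0 := by rw [hv₀s]; exact LinearMap.mem_ker.1 hs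
      have hAv₀ : A v₀ = 0 := by
        rw [← hPfix v₀ hv₀e hv₀X]
        exact hSv₀
      -- η computations
      have hd := hηd v₀ X e
      have b1 : br v₀ X = 0 := by rw [hbrf, hv₀e, hXe]; simp
      have b2 : br v₀ e = 0 := by rw [hbrf, hv₀e, hee]; simp [hAv₀]
      have b3 : br X e = -v := by rw [hbrf, hXe, hee]; simp [hAe, hAXv]
      rw [show d2 br (fun u w => η u w) v₀ X e =
          -η (br v₀ X) e + η (br v₀ e) X - η (br X e) v₀ from rfl] at hd
      rw [b1, b2, b3] at hd
      simp only [map_zero, map_neg, LinearMap.zero_apply, LinearMap.neg_apply, neg_zero,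
        add_zero, zero_add, zero_sub, sub_neg_eq_add, neg_neg] at hd
      -- hd : η v v₀ = dC br J g v₀ X e  (up to arrangement)
      have hJv₀e : g (J v₀) e = 0 := by rw [hJue]; exact hv₀X
      have hJv₀X : g (J v₀) X = 0 := by rw [hJuX, hv₀e]; simp
      have c1 : br (J v₀) e = -(A (J v₀)) := by rw [hbrf, hJv₀e, hee]; simp [hAe]
      have c2 : br (J v₀) (-X) = 0 := by
        rw [hbrf, hJv₀e]
        simp only [map_neg, LinearMap.neg_apply, hXe]
        simp
      have c3 : br e (-X) = -v := by
        rw [hbrf, hee]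
        simp only [map_neg, LinearMap.neg_apply, hXe]
        simp [hAe, hAXv]
      rw [show dC br J g v₀ X e = d2 br (fund J g) (J v₀) (J X) (J e) from rfl, hJX, hJe] at hd
      rw [show d2 br (fund J g) (J v₀) e (-X) =
          -(fund J g) (br (J v₀) e) (-X) + (fund J g) (br (J v₀) (-X)) e
            - (fund J g) (br e (-X)) (J v₀) from rfl, c1, c2, c3] at hd
      simp only [fund, map_zero, map_neg, LinearMap.zero_apply, LinearMap.neg_apply,
        neg_zero, zero_add, neg_neg, add_zero, zero_sub, sub_neg_eq_add] at hd
      rw [hJuX (A (J v₀)), hAmem (J v₀)] at hd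
      rw [hgJ v v₀] at hd
      simp only [neg_neg, neg_zero, zero_add] at hd
      -- hd : η v v₀ = g v v₀ (up to signs/zeros)
      have hE1 : η (A u) v₀ = η (A v₀) u := by
        have hd2 := hηd u v₀ e
        have d1 : br u v₀ = 0 := by rw [hbrf, hue, hv₀e]; simp
        have d2' : br u e = -(A u) := by rw [hbrf, hue, hee]; simp [hAe]
        have d3 : br v₀ e = -(A v₀) := by rw [hbrf, hv₀e, hee]; simp [hAe]
        rw [show d2 br (fun u w => η u w) u v₀ e =
            -η (br u v₀) e + η (br u e) v₀ - η (br v₀ e) u from rfl, d1, d2', d3] at hd2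
        have hJue' : g (J u) e = 0 := by rw [hJue]; exact huX
        have e1 : br (J u) (J v₀) = 0 := by rw [hbrf, hJue', hJv₀e]; simp
        have e2 : br (J u) (-X) = 0 := by
          rw [hbrf, hJue']
          simp only [map_neg, LinearMap.neg_apply, hXe]
          simp
        have e3 : br (J v₀) (-X) = 0 := c2
        rw [show dC br J g u v₀ e = d2 br (fund J g) (J u) (J v₀) (J e) from rfl, hJe] at hd2
        rw [show d2 br (fund J g) (J u) (J v₀) (-X) =
            -(fund J g) (br (J u) (J v₀)) (-X) + (fund J g) (br (J u) (-X)) (J v₀)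
              - (fund J g) (br (J v₀) (-X)) (J u) from rfl, e1, e2, e3] at hd2
        simp only [fund, map_zero, map_neg, LinearMap.zero_apply, LinearMap.neg_apply,
          neg_zero, add_zero, zero_add, zero_sub, sub_zero, neg_neg] at hd2
        linarith [hd2]
      have hη1 : η v v₀ = 0 := by
        have hvdec : v = A u + v₀ := by rw [hv₀def]; abel
        rw [hvdec]
        simp only [map_add, LinearMap.add_apply]
        have h2 : η v₀ v₀ = 0 := by have := hηa v₀ v₀; linarith
        rw [hE1, hAv₀, h2]
        simp
      have hg1 : g v v₀ = g v₀ v₀ := by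
        have hvdec : v = A u + v₀ := by rw [hv₀def]; abel
        rw [hvdec]
        simp only [map_add, LinearMap.add_apply]
        rw [hEA u v₀ hue huX hv₀e hv₀X, hAv₀]
        simp
      have hv₀z : g v₀ v₀ = 0 := by
        rw [← hg1, ← hd, hη1]
      have hv₀0 : v₀ = 0 := by
        by_contra hne
        exact absurd hv₀z (ne_of_gt (hgpos _ hne))
      have hAuv : A u = v := by
        have h' : v - A u = 0 := by rw [← hv₀def]; exact hv₀0
        linear_combination (norm := module) (-1 : ℝ) • h' 
      refine ⟨-u, by simp [hue], by simp [huX], ?_⟩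
      rw [map_neg, hAuv, ha]
      module
    · -- a ≠ 0 : invert a•id - S
      set M : V6 →ₗ[ℝ] V6 := a • LinearMap.id - S with hMdef
      have hMapp : ∀ y, M y = a • y - S y := by
        intro y; rw [hMdef]; simp
      have hMinj : Function.Injective M := by
        rw [← LinearMap.ker_eq_bot, eq_bot_iff]
        intro x hx
        have hx0 : a • x - S x = 0 := by rw [← hMapp]; exact LinearMap.mem_ker.1 hx
        have hSx : S x = a • x := by
          have h' := sub_eq_zero.1 hx0
          exact h'.symm
        have h1 : g (S x) x = 0 := by
          have h2 := hSskew x x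
          have h3 : g x (S x) = g (S x) x := hgsym x (S x)
          linarith
        have h4 : a * g x x = 0 := by
          rw [hSx] at h1
          simpa [smul_eq_mul] using h1
        have h5 : g x x = 0 := by
          rcases mul_eq_zero.1 h4 with h | h
          · exact absurd h ha
          · exact h
        have h6 : x = 0 := by
          by_contra hne
          exact absurd h5 (ne_of_gt (hgpos _ hne))
        simp [h6]
      obtain ⟨w, hww⟩ := (LinearMap.injective_iff_surjective).1 hMinj v
      have hwX : g w X = 0 := by
        have h0 := congrArg (fun z => g z X) hww
        simp only [hMapp, map_sub, map_smul, LinearMap.sub_apply, LinearMap.smul_apply,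
          smul_eq_mul] at h0
        rw [hSX w, hvX] at h0
        have : a * g w X = 0 := by linarith
        rcases mul_eq_zero.1 this with h | h
        · exact absurd h ha
        · exact h
      have hwe : g w e = 0 := by
        have h0 := congrArg (fun z => g z e) hww
        simp only [hMapp, map_sub, map_smul, LinearMap.sub_apply, LinearMap.smul_apply,
          smul_eq_mul] at h0
        rw [hSe w, hve] at h0
        have : a * g w e = 0 := by linarith
        rcases mul_eq_zero.1 this with h | h
        · exact absurd h ha
        · exact h
      refine ⟨w, hwe, hwX, ?_⟩
      have hSw : S w = A w := by rw [hSapp, hPfix w hwe hwX]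
      have h0 : a • w - S w = v := by rw [← hMapp]; exact hww
      rw [hSw] at h0
      linear_combination (norm := module) (-1 : ℝ) • h0
  obtain ⟨w, hwe, hwX, hAw⟩ := hw
  -- the new adapted vector X' and projection Q
  set X' : V6 := X + w with hX'def
  have hX'e : g X' e = 0 := by rw [hX'def]; simp [map_add, hXe, hwe]
  have hX'X : g X' X = 1 := by
    rw [hX'def]
    simp only [map_add, LinearMap.add_apply]
    rw [hXX, hwX]; ring
  have hAX' : A X' = a • X' := by
    rw [hX'def, map_add, hAX, hAw]
    module
  set Q : V6 →ₗ[ℝ] V6 :=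
    LinearMap.id - (g.flip X).smulRight X' - (g.flip e).smulRight e with hQdef
  have hQapp : ∀ y, Q y = y - (g y X) • X' - (g y e) • e := by
    intro y
    rw [hQdef]
    simp [LinearMap.smulRight_apply, LinearMap.flip_apply]
  have hQe : ∀ y, g (Q y) e = 0 := by
    intro y; rw [hQapp]
    simp only [map_sub, map_smul, LinearMap.sub_apply, LinearMap.smul_apply, smul_eq_mul]
    rw [hX'e, hee]; ring
  have hQX : ∀ y, g (Q y) X = 0 := by
    intro y; rw [hQapp]
    simp only [map_sub, map_smul, LinearMap.sub_apply, LinearMap.smul_apply, smul_eq_mul]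
    rw [hX'X, heX]; ring
  have hQdec : ∀ y, y = Q y + (g y X) • X' + (g y e) • e := by
    intro y; rw [hQapp]; abel
  have hQfix : ∀ u, g u e = 0 → g u X = 0 → Q u = u := by
    intro u h1 h2; rw [hQapp, h1, h2]; simp
  -- the new complex structure J'
  set J' : V6 →ₗ[ℝ] V6 :=
    J ∘ₗ Q + (g.flip X).smulRight e - (g.flip e).smulRight X' with hJ'def
  have hJ'app : ∀ y, J' y = J (Q y) + (g y X) • e - (g y e) • X' := by
    intro y
    rw [hJ'def]
    simp [LinearMap.smulRight_apply, LinearMap.flip_apply]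
  have hJ'X : ∀ y, g (J' y) X = - g y e := by
    intro y; rw [hJ'app]
    simp only [map_add, map_sub, map_smul, LinearMap.add_apply, LinearMap.sub_apply,
      LinearMap.smul_apply, smul_eq_mul]
    rw [hJuX (Q y), hQe, heX, hX'X]; ring
  have hJ'e : ∀ y, g (J' y) e = g y X := by
    intro y; rw [hJ'app]
    simp only [map_add, map_sub, map_smul, LinearMap.add_apply, LinearMap.sub_apply,
      LinearMap.smul_apply, smul_eq_mul]
    rw [hJue (Q y), hQX, hee, hX'e]; ring
  have hQJ' : ∀ y, Q (J' y) = J (Q y) := by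
    intro y
    rw [hQapp (J' y), hJ'X, hJ'e, hJ'app]
    module
  have hJ'2 : ∀ y, J' (J' y) = -y := by
    intro y
    rw [hJ'app (J' y), hQJ', hJ'X, hJ'e, hJ2]
    have := hQdec y
    linear_combination (norm := module) this
  -- interaction of A with Q and J'
  have hF1 : ∀ y, A y = A (Q y) + (a * g y X) • X' := by
    intro y
    conv_lhs => rw [hQdec y]
    rw [map_add, map_add, map_smul, map_smul, hAX', hAe]
    module
  have hAyX : ∀ y, g (A y) X = a * g y X := by
    intro y
    rw [hF1]
    simp only [map_add, LinearMap.add_apply, map_smul, LinearMap.smul_apply, smul_eq_mul]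
    rw [hAX0 (Q y) (hQe y) (hQX y), hX'X]; ring
  have hQA : ∀ y, Q (A y) = A (Q y) := by
    intro y
    rw [hQapp, hAyX, hAmem]
    nth_rewrite 1 [hF1 y]
    module
  have hF3 : ∀ y, J' (A y) = J (A (Q y)) + (a * g y X) • e := by
    intro y
    rw [hJ'app, hQA, hAyX, hAmem]
    module
  have hF2 : ∀ y, A (J' y) = J (A (Q y)) - (a * g y e) • X' := by
    intro y
    rw [hJ'app]
    simp only [map_add, map_sub, map_smul]
    rw [hAe, hAX']
    rw [← hI3 (Q y) (hQe y) (hQX y)]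
    module
  have hQX' : Q X' = 0 := by
    rw [hQapp, hX'X, hX'e]
    module
  have hJ'X'e : J' X' = e := by
    rw [hJ'app, hQX', hX'X, hX'e, map_zero]
    module
  have hF4 : ∀ y, J' (A (J' y)) = -(A (Q y)) - (a * g y e) • e := by
    intro y
    rw [hF2 y, map_sub, map_smul, hJ'X'e]
    have hu_e : g (J (A (Q y))) e = 0 := by
      rw [hJue]; exact hAX0 (Q y) (hQe y) (hQX y)
    have hu_X : g (J (A (Q y))) X = 0 := by
      rw [hJuX, hAmem]; simp
    rw [hJ'app (J (A (Q y))), hQfix _ hu_e hu_X, hu_e, hu_X, hJ2]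
    module
  -- integrability of J'
  have hNij' : ∀ x y, Nij br J' x y = 0 := by
    intro x y
    rw [Nij]
    rw [hbrf (J' x) (J' y), hbrf x y, hbrf (J' x) y, hbrf x (J' y), hJ'e x, hJ'e y]
    simp only [map_sub, map_smul]
    rw [hF4 x, hF4 y, hF3 x, hF3 y, hF2 x, hF2 y]
    nth_rewrite 1 [hF1 y]
    nth_rewrite 1 [hF1 x]
    module
  -- the new metric g'
  set g' : V6 →ₗ[ℝ] V6 →ₗ[ℝ] ℝ := LinearMap.mk₂ ℝ
      (fun x y => g (Q x) (Q y) + g x X * g y X + g x e * g y e)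
      (by intro x x' y
          simp only [map_add, LinearMap.add_apply]
          ring)
      (by intro c x y
          simp only [map_smul, LinearMap.smul_apply, smul_eq_mul]
          ring)
      (by intro x y y'
          simp only [map_add, LinearMap.add_apply]
          ring)
      (by intro c x y
          simp only [map_smul, LinearMap.smul_apply, smul_eq_mul]
          ring) with hg'def
  have hg'app : ∀ x y, g' x y = g (Q x) (Q y) + g x X * g y X + g x e * g y e := by
    intro x y; rw [hg'def]; rfl
  have hg'sym : ∀ x y, g' x y = g' y x := by
    intro x y
    rw [hg'app, hg'app, hgsym (Q x) (Q y), hgsym x X, hgsym y X, hgsym x e, hgsym y e]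
    ring
  have hg'pos : ∀ x, x ≠ 0 → 0 < g' x x := by
    intro x hx
    rw [hg'app]
    rcases eq_or_ne (Q x) 0 with h | h
    · have h2 : ¬ (g x X = 0 ∧ g x e = 0) := by
        rintro ⟨h3, h4⟩
        apply hx
        have h5 := hQdec x
        rw [h, h3, h4] at h5
        simpa using h5
      have h5 : 0 < g x X * g x X + g x e * g x e := by
        rcases not_and_or.1 h2 with h6 | h6
        · nlinarith [mul_self_nonneg (g x X), mul_self_nonneg (g x e), mul_self_pos.2 h6]
        · nlinarith [mul_self_nonneg (g x X), mul_self_nonneg (g x e), mul_self_pos.2 h6]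
      rw [h]
      simpa using h5
    · nlinarith [hgpos _ h, mul_self_nonneg (g x X), mul_self_nonneg (g x e)]
  have hg'J : ∀ x y, g' (J' x) (J' y) = g' x y := by
    intro x y
    rw [hg'app, hg'app, hQJ', hQJ', hJ'X, hJ'X, hJ'e, hJ'e, hgJ]
    ring
  -- the fundamental form of (J', g') and closedness
  have hW1 : ∀ s t, fund J' g' s t = g (J (Q s)) (Q t) - g s e * g t X + g s X * g t e := by
    intro s t
    rw [show fund J' g' s t = g' (J' s) t from rfl, hg'app, hQJ', hJ'X, hJ'e]
    ring
  have hW2 : ∀ u t, fund J' g' (A u) t = g (J (A (Q u))) (Q t) + a * g u X * g t e := by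
    intro u t
    rw [hW1, hQA, hAmem, hAyX]
    ring
  have hSYM : ∀ u t, g (J (A (Q u))) (Q t) = g (J (A (Q t))) (Q u) := by
    intro u t
    rw [hI3 (Q u) (hQe u) (hQX u)]
    rw [hEA (J (Q u)) (Q t) (by rw [hJue]; exact hQX u) (by rw [hJuX, hQe u]; simp)
      (hQe t) (hQX t)]
    have hJmove : ∀ p q : V6, g (J p) q = - g p (J q) := by
      intro p q
      conv_lhs => rw [show q = -(J (J q)) from by rw [hJ2 q]; simp]
      rw [map_neg]
      rw [hgJ p (J q)]
    rw [hJmove (Q u) (A (Q t))]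
    rw [hgsym]
    simp
  have hWlin : ∀ (c d : ℝ) (u w t : V6),
      fund J' g' (c • u - d • w) t = c * fund J' g' u t - d * fund J' g' w t := by
    intro c d u w t
    show g' (J' (c • u - d • w)) t = c * g' (J' u) t - d * g' (J' w) t
    simp only [map_sub, map_smul, LinearMap.sub_apply, LinearMap.smul_apply, smul_eq_mul]
  have hclosed : ∀ x y z, d2 br (fund J' g') x y z = 0 := by
    intro x y z
    rw [show d2 br (fund J' g') x y z =
        -(fund J' g') (br x y) z + (fund J' g') (br x z) y - (fund J' g') (br y z) x from rfl]
    rw [hbrf x y, hbrf x z, hbrf y z]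
    rw [hWlin, hWlin, hWlin]
    rw [hW2 y z, hW2 x z, hW2 z y, hW2 x y, hW2 z x, hW2 y x]
    rw [hSYM z y, hSYM z x, hSYM y x]
    ring
  exact hnk ⟨J', g', ⟨⟨⟨hJ'2, hNij'⟩, hg'sym, hg'pos, hg'J⟩, hclosed⟩⟩
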